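/- Suppose S is a real skew-symmetric (1+m)×(1+m) matrix, decomposed as S = [[0, ℓ],[−ℓ^T, −M]] with M = −M^T, and suppose (S ⊗ I_n) L_R = M_R for all real n×n matrices R, where L_R = [R; (P⊗R)C] and M_R = [RB; −(P⊗RA)C]. Then with f(z) = ℓ(zI_m − M)^{-1}ℓ^T one has f(A) = B, i.e., B = (ℓ⊗I_n)(I_m⊗A − M⊗I_n)^{-1}(ℓ^T⊗I_n). -/

import Mathlib

open Matrix Kronecker

open Polynomial


lemma aux_eval_charpoly {k K : Type*} [Fintype k] [DecidableEq k] [CommRing K]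
    (N : Matrix k k K) (ν : K) : (N.charpoly).eval ν = (ν • (1 : Matrix k k K) - N).det := by
  rw [Matrix.charpoly, _root_.eval_det, matPolyEquiv_charmatrix]
  congr 1
  simp [Matrix.scalar, smul_eq_diagonal_mul]

lemma aux_spec_iff {k : Type*} [Fintype k] [DecidableEq k] (N : Matrix k k ℂ) (μ : ℂ) :
    μ ∈ spectrum ℂ N ↔ ∃ v, v ≠ 0 ∧ N *ᵥ v = μ • v := by
  rw [spectrum.mem_iff, Matrix.isUnit_iff_isUnit_det, isUnit_iff_ne_zero, not_ne_iff,
    ← Matrix.exists_mulVec_eq_zero_iff]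
  have key : ∀ v : k → ℂ, ((algebraMap ℂ (Matrix k k ℂ)) μ - N) *ᵥ v = μ • v - N *ᵥ v := by
    intro v
    rw [Matrix.sub_mulVec]
    congr 1
    ext i
    simp [Matrix.algebraMap_eq_diagonal, Matrix.mulVec_diagonal]
  constructor
  · rintro ⟨v, hv, h⟩
    refine ⟨v, hv, ?_⟩
    rw [key] at h
    rw [← sub_eq_zero, ← neg_sub, h, neg_zero]
  · rintro ⟨v, hv, h⟩
    exact ⟨v, hv, by rw [key, h, sub_self]⟩

lemma aux_root_mem_spec {k : Type*} [Fintype k] [DecidableEq k] (N : Matrix k k ℂ) (ν : ℂ)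
    (h : (N.charpoly).eval ν = 0) : ν ∈ spectrum ℂ N := by
  rw [spectrum.mem_iff, Matrix.isUnit_iff_isUnit_det, isUnit_iff_ne_zero, not_ne_iff]
  rw [aux_eval_charpoly] at h
  rw [← h]
  congr 1
  ext i j
  simp [Matrix.algebraMap_eq_diagonal, Matrix.diagonal_apply, Matrix.one_apply, Matrix.smul_apply]

lemma aux_skew_imag {m : ℕ} (M : Matrix (Fin m) (Fin m) ℝ) (hM : Mᵀ = -M) (μ : ℂ)
    (hμ : μ ∈ spectrum ℂ (M.map (algebraMap ℝ ℂ))) : μ + starRingEnd ℂ μ = 0 := by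
  obtain ⟨v, hv, h⟩ := (aux_spec_iff _ μ).1 hμ
  set N := M.map (algebraMap ℝ ℂ) with hN
  have hNH : Nᴴ = -N := by
    ext i j
    simp only [hN, Matrix.conjTranspose_apply, Matrix.map_apply, Matrix.neg_apply]
    have := congrFun (congrFun hM j) i
    simp only [Matrix.transpose_apply, Matrix.neg_apply] at this
    rw [this]
    push_cast
    simp
  have h1 : star v ⬝ᵥ (N *ᵥ v) = μ * (star v ⬝ᵥ v) := by
    rw [h, dotProduct_smul, smul_eq_mul]
  have h2 : star v ⬝ᵥ (N *ᵥ v) = -(starRingEnd ℂ μ * (star v ⬝ᵥ v)) := by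
    rw [Matrix.dotProduct_mulVec]
    have e : star v ᵥ* N = star (Nᴴ *ᵥ v) := by
      rw [Matrix.star_mulVec, conjTranspose_conjTranspose]
    rw [e, hNH, Matrix.neg_mulVec, h]
    simp [dotProduct, Finset.mul_sum, mul_comm, mul_left_comm]
  have hvv : star v ⬝ᵥ v ≠ 0 := by
    intro hc
    apply hv
    have hre : (star v ⬝ᵥ v).re = ∑ i, Complex.normSq (v i) := by
      simp [dotProduct, Complex.normSq_apply]
    rw [hc] at hre
    have hall := (Finset.sum_eq_zero_iff_of_nonneg
      (fun i _ => Complex.normSq_nonneg (v i))).1 hre.symm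
    funext i
    exact Complex.normSq_eq_zero.1 (hall i (Finset.mem_univ i))
  have key : (μ + starRingEnd ℂ μ) * (star v ⬝ᵥ v) = 0 := by
    have := h1.symm.trans h2
    linear_combination this
  rcases mul_eq_zero.1 key with h' | h'
  · exact h'
  · exact absurd h' hvv

lemma aux_multiset_unit {k : Type*} [Fintype k] [DecidableEq k] (T : Matrix k k ℂ)
    (s : Multiset ℂ) (h : ∀ ν ∈ s, IsUnit (Polynomial.aeval T (X - C ν))) :
    IsUnit (Polynomial.aeval T (s.map (fun ν => X - C ν)).prod) := by
  induction s using Multiset.induction_on with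
  | empty => simp
  | cons a t ih =>
    rw [Multiset.map_cons, Multiset.prod_cons, _root_.map_mul]
    exact (h a (Multiset.mem_cons_self a t)).mul
      (ih (fun ν hν => h ν (Multiset.mem_cons_of_mem hν)))

lemma aux_K_unit {n m : ℕ} (A : Matrix (Fin n) (Fin n) ℝ)
    (hreg : ∀ μ ∈ spectrum ℂ (A.map (algebraMap ℝ ℂ)),
      ∀ ν ∈ spectrum ℂ (A.map (algebraMap ℝ ℂ)), μ + starRingEnd ℂ ν ≠ 0)
    (M : Matrix (Fin m) (Fin m) ℝ) (hM : Mᵀ = -M) :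
    IsUnit ((1 : Matrix (Fin m) (Fin m) ℝ) ⊗ₖ A - M ⊗ₖ (1 : Matrix (Fin n) (Fin n) ℝ)) := by
  set K := (1 : Matrix (Fin m) (Fin m) ℝ) ⊗ₖ A - M ⊗ₖ (1 : Matrix (Fin n) (Fin n) ℝ) with hK
  rw [Matrix.isUnit_iff_isUnit_det, isUnit_iff_ne_zero]
  intro hdet
  have hdetC : (K.map (algebraMap ℝ ℂ)).det = 0 := by
    rw [show K.map (algebraMap ℝ ℂ) = (algebraMap ℝ ℂ).mapMatrix K from rfl,
      ← RingHom.map_det, hdet, map_zero]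
  obtain ⟨v, hv, hker⟩ := Matrix.exists_mulVec_eq_zero_iff.2 hdetC
  set Ac := A.map (algebraMap ℝ ℂ) with hAc
  set Mc := M.map (algebraMap ℝ ℂ) with hMc
  set Y : Matrix (Fin m) (Fin n) ℂ := Matrix.of (fun k j => v (k, j)) with hY
  have hXA : Y * Acᵀ = Mc * Y := by
    ext i j
    have h0 := congrFun hker (i, j)
    simp only [Matrix.mulVec, dotProduct, hK, Matrix.map_apply, Matrix.sub_apply,
      Matrix.kroneckerMap_apply, Fintype.sum_prod_type, map_sub, _root_.map_mul, Pi.zero_apply,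
      Matrix.one_apply, apply_ite (algebraMap ℝ ℂ), _root_.map_one, map_zero, ite_mul, one_mul, zero_mul, mul_ite, sub_mul,
      mul_one, mul_zero, Finset.sum_sub_distrib, Finset.sum_ite_eq, Finset.sum_ite_eq',
      Finset.mem_univ, if_true] at h0
    simp only [Matrix.mul_apply, Matrix.transpose_apply, hY, Matrix.of_apply, hAc, hMc,
      Matrix.map_apply]
    rw [← sub_eq_zero]
    have h1 : (∑ x : Fin m, ∑ l : Fin n, if i = x then (algebraMap ℝ ℂ) (A j l) * v (x, l) else 0)
        = ∑ l : Fin n, (algebraMap ℝ ℂ) (A j l) * v (i, l) := by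
      rw [Finset.sum_comm]
      simp [Finset.sum_ite_eq]
    rw [h1] at h0
    rw [← h0]
    congr 1
    exact Finset.sum_congr rfl (fun l _ => mul_comm _ _)
  have hpow : ∀ s : ℕ, Y * (Acᵀ) ^ s = Mc ^ s * Y := by
    intro s
    induction s with
    | zero => simp
    | succ t ih =>
      rw [pow_succ, pow_succ, ← Matrix.mul_assoc, ih, Matrix.mul_assoc, hXA, ← Matrix.mul_assoc]
  have hpoly : ∀ q : Polynomial ℂ, Y * (Polynomial.aeval Acᵀ q) = (Polynomial.aeval Mc q) * Y := by
    intro q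
    induction q using Polynomial.induction_on' with
    | add p q hp hq => rw [map_add, map_add, Matrix.mul_add, Matrix.add_mul, hp, hq]
    | monomial s a =>
      rw [Polynomial.aeval_monomial, Polynomial.aeval_monomial,
        Algebra.algebraMap_eq_smul_one, Algebra.algebraMap_eq_smul_one,
        Matrix.smul_mul, Matrix.smul_mul, Matrix.one_mul, Matrix.one_mul,
        Matrix.mul_smul, Matrix.smul_mul, hpow s]
  have h00 : Y * (Polynomial.aeval Acᵀ (Mc.charpoly)) = 0 := by
    rw [hpoly, Matrix.aeval_self_charpoly]
    simp
  have hfac : ∀ ν ∈ (Mc.charpoly).roots, IsUnit (Polynomial.aeval Acᵀ (X - C ν)) := by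
    intro ν hν
    have hνspecM : ν ∈ spectrum ℂ Mc :=
      aux_root_mem_spec Mc ν (Polynomial.isRoot_of_mem_roots hν)
    have hνim := aux_skew_imag M hM ν hνspecM
    by_contra hcon
    have h1 : ¬ IsUnit ((algebraMap ℂ (Matrix (Fin n) (Fin n) ℂ)) ν - Acᵀ) := by
      intro hu
      apply hcon
      rw [map_sub, Polynomial.aeval_X, Polynomial.aeval_C, ← neg_sub]
      exact hu.neg
    have h2 : ν ∈ spectrum ℂ Ac := by
      rw [spectrum.mem_iff, Matrix.isUnit_iff_isUnit_det]
      rw [Matrix.isUnit_iff_isUnit_det] at h1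
      intro hu
      apply h1
      rw [← Matrix.det_transpose]
      convert hu using 2
      ext i j
      simp only [Matrix.transpose_apply, Matrix.sub_apply, Matrix.algebraMap_eq_diagonal,
        Matrix.diagonal_apply, Pi.algebraMap_apply]
      aesop
    exact hreg ν h2 ν h2 hνim
  have hunit : IsUnit (Polynomial.aeval Acᵀ (Mc.charpoly)) := by
    have hsplit := (IsAlgClosed.splits (Mc.charpoly)).eq_prod_roots_of_monic
      (Matrix.charpoly_monic Mc)
    rw [hsplit]
    exact aux_multiset_unit Acᵀ (Mc.charpoly).roots hfac
  obtain ⟨u, hu⟩ := hunit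
  have hX0 : Y = 0 := by
    have h3 : Y * ((u : Matrix (Fin n) (Fin n) ℂ) * ((u⁻¹ : (Matrix (Fin n) (Fin n) ℂ)ˣ) :
        Matrix (Fin n) (Fin n) ℂ)) = 0 := by
      rw [← Matrix.mul_assoc, hu, h00, Matrix.zero_mul]
    rw [Units.mul_inv, Matrix.mul_one] at h3
    exact h3
  apply hv
  funext p
  have h4 := congrFun (congrFun hX0 p.1) p.2
  simpa [hY] using h4

/-- If the real skew-symmetric matrix `S = [[0, ℓ],[−ℓᵀ, −M]]` satisfies
`(S ⊗ I_n) L_R = M_R` for all real `R`, where `L_R = [R; (P⊗R)C]` and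
`M_R = [R B; −(P⊗(R A))C]`, then for `f(z) = ℓ (z I_m − M)⁻¹ ℓᵀ` one has
`f(A) = B`, i.e. `B = (ℓ ⊗ I_n)(I_m ⊗ A − M ⊗ I_n)⁻¹(ℓᵀ ⊗ I_n)`. -/
theorem stmt18 {n m : ℕ} (A B : Matrix (Fin n) (Fin n) ℝ)
    (hreg : ∀ μ ∈ spectrum ℂ (A.map (algebraMap ℝ ℂ)),
      ∀ ν ∈ spectrum ℂ (A.map (algebraMap ℝ ℂ)), μ + starRingEnd ℂ ν ≠ 0)
    (M : Matrix (Fin m) (Fin m) ℝ) (hM : Mᵀ = -M)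
    (ℓrow : Matrix (Fin 1) (Fin m) ℝ)
    (P : Matrix (Fin m) (Fin m) ℝ) (hP : IsUnit P)
    (bC : Matrix (Fin m × Fin n) (Fin n) ℝ)
    (hS : ∀ R : Matrix (Fin n) (Fin n) ℝ,
      ((Matrix.fromBlocks (0 : Matrix (Fin 1) (Fin 1) ℝ) ℓrow (-ℓrowᵀ) (-M)) ⊗ₖ
          (1 : Matrix (Fin n) (Fin n) ℝ)) *
        (Matrix.of fun (p : (Fin 1 ⊕ Fin m) × Fin n) (j : Fin n) =>
          Sum.elim (fun _ => R p.2 j) (fun k => ((P ⊗ₖ R) * bC) (k, p.2) j) p.1) =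
      (Matrix.of fun (p : (Fin 1 ⊕ Fin m) × Fin n) (j : Fin n) =>
        Sum.elim (fun _ => (R * B) p.2 j)
          (fun k => (-((P ⊗ₖ (R * A)) * bC)) (k, p.2) j) p.1)) :
    ∀ x y : Fin n, B x y =
      ((ℓrow ⊗ₖ (1 : Matrix (Fin n) (Fin n) ℝ)) *
        ((1 : Matrix (Fin m) (Fin m) ℝ) ⊗ₖ A - M ⊗ₖ (1 : Matrix (Fin n) (Fin n) ℝ))⁻¹ *
        (ℓrowᵀ ⊗ₖ (1 : Matrix (Fin n) (Fin n) ℝ))) (0, x) (0, y) := by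
  intro x y
  have h1 := hS 1
  set K := (1 : Matrix (Fin m) (Fin m) ℝ) ⊗ₖ A - M ⊗ₖ (1 : Matrix (Fin n) (Fin n) ℝ) with hKdef
  have hK : IsUnit K := aux_K_unit A hreg M hM
  set D : Matrix (Fin m × Fin n) (Fin n) ℝ :=
    (P ⊗ₖ (1 : Matrix (Fin n) (Fin n) ℝ)) * bC with hD
  set Dm : Matrix (Fin m × Fin n) (Fin 1 × Fin n) ℝ :=
    Matrix.of (fun p q => D p q.2) with hDm
  have claim1 : (ℓrow ⊗ₖ (1 : Matrix (Fin n) (Fin n) ℝ)) * Dm =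
      Matrix.of (fun (p : Fin 1 × Fin n) (q : Fin 1 × Fin n) => B p.2 q.2) := by
    ext ⟨a, x'⟩ ⟨b, y'⟩
    have h := congrFun (congrFun h1 (Sum.inl a, x')) y'
    simp only [Matrix.mul_apply, Matrix.of_apply, Sum.elim_inl, Sum.elim_inr,
      Matrix.kroneckerMap_apply, Matrix.fromBlocks_apply₁₁, Matrix.fromBlocks_apply₁₂,
      Fintype.sum_prod_type, Fintype.sum_sum_type, Matrix.zero_apply, zero_mul,
      Finset.sum_const_zero, zero_add, Matrix.one_apply, Matrix.one_mul] at h ⊢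
    simp only [hDm, Matrix.of_apply]
    simpa [ite_mul, zero_mul, one_mul, mul_ite, mul_zero, mul_one,
      Finset.sum_ite_eq, Finset.sum_ite_eq'] using h
  have claim2 : K * Dm = ℓrowᵀ ⊗ₖ (1 : Matrix (Fin n) (Fin n) ℝ) := by
    ext ⟨k, x'⟩ ⟨b, y'⟩
    have h := congrFun (congrFun h1 (Sum.inr k, x')) y'
    simp only [Matrix.mul_apply, Matrix.of_apply, Sum.elim_inl, Sum.elim_inr,
      Matrix.kroneckerMap_apply, Matrix.fromBlocks_apply₂₁, Matrix.fromBlocks_apply₂₂,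
      Fintype.sum_prod_type, Fintype.sum_sum_type, Matrix.one_apply, Matrix.one_mul] at h ⊢
    have hPA : (P ⊗ₖ A) * bC = ((1 : Matrix (Fin m) (Fin m) ℝ) ⊗ₖ A) * D := by
      rw [hD, ← Matrix.mul_assoc, ← Matrix.mul_kronecker_mul, Matrix.one_mul, Matrix.mul_one]
    rw [Matrix.neg_apply, hPA] at h
    simp only [hKdef, hDm, Matrix.of_apply, Matrix.sub_apply, Matrix.kroneckerMap_apply,
      Matrix.mul_apply, Fintype.sum_prod_type, Matrix.one_apply, Matrix.neg_apply,
      sub_mul, ite_mul, mul_ite, one_mul, zero_mul, mul_one, mul_zero, neg_mul,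
      Finset.sum_sub_distrib, Finset.sum_ite_eq, Finset.sum_ite_eq', Finset.mem_univ, if_true,
      Finset.sum_neg_distrib, Fin.sum_univ_one] at h ⊢
    have hb : b = (0 : Fin 1) := Subsingleton.elim _ _
    subst hb
    split_ifs at h ⊢ with hxy <;> linarith
  have hKinv : K⁻¹ * (K * Dm) = Dm := by
    rw [← Matrix.mul_assoc, Matrix.nonsing_inv_mul K
      ((Matrix.isUnit_iff_isUnit_det K).1 hK), Matrix.one_mul]
  have key : (ℓrow ⊗ₖ (1 : Matrix (Fin n) (Fin n) ℝ)) * K⁻¹ *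
      (ℓrowᵀ ⊗ₖ (1 : Matrix (Fin n) (Fin n) ℝ)) =
      Matrix.of (fun (p : Fin 1 × Fin n) (q : Fin 1 × Fin n) => B p.2 q.2) := by
    rw [Matrix.mul_assoc, ← claim2, hKinv, claim1]
  rw [key]
  simp
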